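/- arXiv:quant-ph/0209091 — 3 statements merged into one kernel-verified Lean document; each statement's English description precedes it below -/
import Mathlib

section
/- Let p be prime and let C ⊆ C_max ⊆ C^⊥ be linear subspaces of Z_p^{2n} with C_max = C_max^⊥ (orthogonality with respect to the symplectic inner product). Let e ∈ C_max \ C, and let R ⊆ C^⊥ be a complete set of representatives of the cosets of C_max in C^⊥ (one element from each coset). Then Σ_{x ∈ R} ω^{⟨e,x⟩} = 0, where ω = exp(2πi/p) and the exponent is the canonical integer representative of ⟨e,x⟩ ∈ Z_p. -/
open scoped BigOperators
open Matrix

/-- `omg p` is the complex primitive `p`-th root of unity `exp(2πi/p)`. -/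
noncomputable def omg (p : ℕ) : ℂ := Complex.exp (2 * Real.pi * Complex.I / p)

/-- The generalized Pauli matrix `XZ(u) = X^{a_1}Z^{b_1} ⊗ ⋯ ⊗ X^{a_n}Z^{b_n}`
for `u = ((a_1,b_1),…,(a_n,b_n)) ∈ (Z_p²)ⁿ`, written out entrywise with respect to the
computational basis of `(ℂ^p)^{⊗n} ≃ ℂ^{p^n}`, whose coordinates are indexed by
`Fin n → ZMod p`.  (It is the matrix determined by
`XZ(u) |i₁ … iₙ⟩ = ∏_t ω^{b_t i_t} |i₁+a₁, …, iₙ+aₙ⟩`.) -/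
noncomputable def XZ (p n : ℕ) (u : Fin n → ZMod p × ZMod p) :
    Matrix (Fin n → ZMod p) (Fin n → ZMod p) ℂ :=
  fun j i => ∏ t : Fin n, if j t = i t + (u t).1 then omg p ^ ((u t).2 * i t).val else 0

/-- The symplectic inner product `⟨u,v⟩ = Σ b_i c_i − a_i d_i` on `Z_p^{2n}`. -/
def symp (p n : ℕ) (u v : Fin n → ZMod p × ZMod p) : ZMod p :=
  ∑ t : Fin n, ((u t).2 * (v t).1 - (u t).1 * (v t).2)

/-- The standard Hermitian inner product on `I → ℂ`. -/
noncomputable def cinner {I : Type*} [Fintype I] (x y : I → ℂ) : ℂ :=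
  ∑ i, (starRingEnd ℂ) (x i) * y i

noncomputable def sympB (p n : ℕ) :
    LinearMap.BilinForm (ZMod p) (Fin n → ZMod p × ZMod p) :=
  LinearMap.mk₂ (ZMod p) (symp p n)
    (by intro u u' v; unfold symp; rw [← Finset.sum_add_distrib]
        exact Finset.sum_congr rfl fun t _ => by simp; ring)
    (by intro a u v; unfold symp; rw [smul_eq_mul, Finset.mul_sum]
        exact Finset.sum_congr rfl fun t _ => by simp; ring)
    (by intro u v v'; unfold symp; rw [← Finset.sum_add_distrib]
        exact Finset.sum_congr rfl fun t _ => by simp; ring)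
    (by intro a u v; unfold symp; rw [smul_eq_mul, Finset.mul_sum]
        exact Finset.sum_congr rfl fun t _ => by simp; ring)

lemma symp_skew (p n : ℕ) (u v : Fin n → ZMod p × ZMod p) :
    symp p n u v = - symp p n v u := by
  unfold symp; rw [← Finset.sum_neg_distrib]
  exact Finset.sum_congr rfl fun t _ => by ring

lemma sympB_nondeg (p n : ℕ) [Fact p.Prime] : (sympB p n).Nondegenerate := by
  refine (LinearMap.IsRefl.nondegenerate_iff_separatingLeft (fun u v h => by
    simp only [sympB, LinearMap.mk₂_apply] at *
    rw [symp_skew, h, neg_zero])).2 ?_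
  intro u hu
  funext t
  have h1 := hu (Pi.single t (1, 0))
  have h2 := hu (Pi.single t (0, 1))
  simp only [sympB, symp, LinearMap.mk₂_apply, Pi.single_apply] at h1 h2
  simp [apply_ite Prod.fst, apply_ite Prod.snd, Finset.sum_ite_eq'] at h1 h2
  ext <;> simp [h1, h2]

lemma sympB_refl (p n : ℕ) : (sympB p n).IsRefl := by
  intro u v h
  simp only [sympB, LinearMap.mk₂_apply] at *
  rw [symp_skew, h, neg_zero]

/-- For `e ∈ C_max \ C` and a complete set `R` of representatives of the cosets of
`C_max` in `C^⊥`, the character sum `Σ_{x ∈ R} ω^{⟨e,x⟩}` vanishes. -/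
theorem character_sum_zero (p n : ℕ) [Fact p.Prime]
    (C Cmax : Submodule (ZMod p) (Fin n → ZMod p × ZMod p))
    (hCsub : C ≤ Cmax)
    (hsub : ∀ u ∈ Cmax, ∀ c ∈ C, symp p n c u = 0)
    (hmax : ∀ u, u ∈ Cmax ↔ ∀ c ∈ Cmax, symp p n c u = 0)
    (e : Fin n → ZMod p × ZMod p) (heMax : e ∈ Cmax) (heC : e ∉ C)
    (R : Finset (Fin n → ZMod p × ZMod p))
    (hRsub : ∀ x ∈ R, ∀ c ∈ C, symp p n c x = 0)
    (hRrep : ∀ v : Fin n → ZMod p × ZMod p, (∀ c ∈ C, symp p n c v = 0) →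
      ∃! x, x ∈ R ∧ v - x ∈ Cmax) :
    ∑ x ∈ R, omg p ^ (symp p n e x).val = 0 := by
  have hp : p.Prime := Fact.out
  -- find x₀ in C^⊥ with symp e x₀ ≠ 0
  have heC' : e ∉ (sympB p n).orthogonal ((sympB p n).orthogonal C) := by
    rwa [LinearMap.BilinForm.orthogonal_orthogonal (sympB_nondeg p n) (sympB_refl p n)]
  rw [LinearMap.BilinForm.mem_orthogonal_iff] at heC'
  push_neg at heC'
  obtain ⟨x₀, hx₀orth, hx₀⟩ := heC'
  rw [LinearMap.BilinForm.mem_orthogonal_iff] at hx₀orth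
  have hx₀C : ∀ c ∈ C, symp p n c x₀ = 0 := fun c hc => hx₀orth c hc
  have ha : symp p n e x₀ ≠ 0 := by
    intro h
    apply hx₀
    show symp p n x₀ e = 0
    rw [symp_skew, h, neg_zero]
  set a : ZMod p := symp p n e x₀ with ha_def
  -- linearity helpers
  have hadd : ∀ u v w, symp p n u (v + w) = symp p n u v + symp p n u w := by
    intro u v w
    exact map_add ((sympB p n) u) v w
  have hsubl : ∀ u v w, symp p n u (v - w) = symp p n u v - symp p n u w := by
    intro u v w
    exact map_sub ((sympB p n) u) v w
  -- symp e vanishes on Cmax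
  have heMax0 : ∀ m ∈ Cmax, symp p n e m = 0 := by
    intro m hm
    exact ((hmax m).mp hm) e heMax
  -- the translation bijection on R
  have hshift : ∀ x ∈ R, ∀ c ∈ C, symp p n c (x + x₀) = 0 := by
    intro x hx c hc; rw [hadd, hRsub x hx c hc, hx₀C c hc, add_zero]
  have hshift' : ∀ x ∈ R, ∀ c ∈ C, symp p n c (x - x₀) = 0 := by
    intro x hx c hc; rw [hsubl, hRsub x hx c hc, hx₀C c hc, sub_zero]
  classical
  set i : ∀ x ∈ R, (Fin n → ZMod p × ZMod p) :=
    fun x hx => (hRrep (x + x₀) (hshift x hx)).choose with hi_def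
  set j : ∀ x ∈ R, (Fin n → ZMod p × ZMod p) :=
    fun x hx => (hRrep (x - x₀) (hshift' x hx)).choose with hj_def
  have hiR : ∀ x (hx : x ∈ R), i x hx ∈ R :=
    fun x hx => ((hRrep (x + x₀) (hshift x hx)).choose_spec.1).1
  have hiMem : ∀ x (hx : x ∈ R), (x + x₀) - i x hx ∈ Cmax :=
    fun x hx => ((hRrep (x + x₀) (hshift x hx)).choose_spec.1).2
  have hjR : ∀ x (hx : x ∈ R), j x hx ∈ R :=
    fun x hx => ((hRrep (x - x₀) (hshift' x hx)).choose_spec.1).1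
  have hjMem : ∀ x (hx : x ∈ R), (x - x₀) - j x hx ∈ Cmax :=
    fun x hx => ((hRrep (x - x₀) (hshift' x hx)).choose_spec.1).2
  have hji : ∀ x (hx : x ∈ R), j (i x hx) (hiR x hx) = x := by
    intro x hx
    have huniq := (hRrep (i x hx - x₀) (hshift' _ (hiR x hx))).choose_spec.2
    have hx' : x ∈ R ∧ (i x hx - x₀) - x ∈ Cmax := by
      refine ⟨hx, ?_⟩
      have : (i x hx - x₀) - x = -((x + x₀) - i x hx) := by abel
      rw [this]
      exact neg_mem (hiMem x hx)
    have h1 := huniq x hx'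
    have h2 := huniq (j (i x hx) (hiR x hx))
      ⟨hjR _ (hiR x hx), hjMem _ (hiR x hx)⟩
    rw [h2, ← h1]
  have hij : ∀ x (hx : x ∈ R), i (j x hx) (hjR x hx) = x := by
    intro x hx
    have huniq := (hRrep (j x hx + x₀) (hshift _ (hjR x hx))).choose_spec.2
    have hx' : x ∈ R ∧ (j x hx + x₀) - x ∈ Cmax := by
      refine ⟨hx, ?_⟩
      have : (j x hx + x₀) - x = -((x - x₀) - j x hx) := by abel
      rw [this]
      exact neg_mem (hjMem x hx)
    have h1 := huniq x hx'
    have h2 := huniq (i (j x hx) (hjR x hx))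
      ⟨hiR _ (hjR x hx), hiMem _ (hjR x hx)⟩
    rw [h2, ← h1]
  -- value identity
  have hvalj : ∀ x (hx : x ∈ R), symp p n e (j x hx) + a = symp p n e x := by
    intro x hx
    have h0 := heMax0 _ (hjMem x hx)
    rw [hsubl, hsubl] at h0
    linear_combination -h0
  -- roots of unity facts
  have hprim : IsPrimitiveRoot (omg p) p := Complex.isPrimitiveRoot_exp p hp.ne_zero
  have hωp : omg p ^ p = 1 := hprim.pow_eq_one
  have hmod : ∀ k : ℕ, omg p ^ (k % p) = omg p ^ k := by
    intro k
    conv_rhs => rw [← Nat.mod_add_div k p]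
    rw [pow_add, pow_mul, hωp, one_pow, mul_one]
  have hvala : ∀ u v : ZMod p, omg p ^ ((u + v).val) = omg p ^ u.val * omg p ^ v.val := by
    intro u v
    rw [ZMod.val_add, hmod, pow_add]
  -- the reindexing
  have hsum : ∑ x ∈ R, omg p ^ (symp p n e x).val
      = ∑ x ∈ R, omg p ^ (symp p n e x + a).val := by
    refine Finset.sum_bij' (fun x hx => j x hx) (fun x hx => i x hx)
      hjR hiR hij hji ?_
    intro x hx
    rw [hvalj x hx]
  have hfac : (∑ x ∈ R, omg p ^ (symp p n e x + a).val)
      = (∑ x ∈ R, omg p ^ (symp p n e x).val) * omg p ^ a.val := by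
    rw [Finset.sum_mul]
    exact Finset.sum_congr rfl fun x _ => (hvala _ _)
  rw [hfac] at hsum
  have hne : omg p ^ a.val ≠ 1 := by
    apply hprim.pow_ne_one_of_pos_of_lt
    · exact (fun h => ha ((ZMod.val_eq_zero a).mp h))
    · exact ZMod.val_lt a
  have h0 : (∑ x ∈ R, omg p ^ (symp p n e x).val) * (omg p ^ a.val - 1) = 0 := by
    rw [mul_sub, mul_one, ← hsum, sub_self]
  rcases mul_eq_zero.mp h0 with h | h
  · exact h
  · exact absurd (by linear_combination h) hne
end

section
/- In the badcodeword construction: for every e ∈ C^⊥, |⟨ψ1, XZ(e)ψ2⟩| = p^{−k/2}. -/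
open scoped BigOperators
open Matrix

/- ### auxiliary character lemmas -/


noncomputable def chi (p : ℕ) (a : ZMod p) : ℂ := omg p ^ a.val

lemma omg_pow_p (p : ℕ) [NeZero p] : omg p ^ p = 1 := by
  have hp : (p : ℂ) ≠ 0 := Nat.cast_ne_zero.2 (NeZero.ne p)
  rw [omg, ← Complex.exp_nat_mul]
  rw [mul_div_assoc', mul_div_cancel_left₀ _ hp]
  simpa [mul_comm] using Complex.exp_two_pi_mul_I

lemma omg_pow_mod (p m : ℕ) [NeZero p] : omg p ^ (m % p) = omg p ^ m := by
  conv_rhs => rw [← Nat.mod_add_div m p]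
  rw [pow_add, pow_mul, omg_pow_p, one_pow, mul_one]

lemma chi_add (p : ℕ) [NeZero p] (a b : ZMod p) : chi p (a + b) = chi p a * chi p b := by
  rw [chi, chi, chi, ← pow_add, ZMod.val_add, omg_pow_mod]

lemma chi_zero (p : ℕ) [NeZero p] : chi p 0 = 1 := by simp [chi]

lemma abs_omg (p : ℕ) : ‖omg p‖ = 1 := by
  have h : (2 * (Real.pi : ℂ) * Complex.I / p) = ((2 * Real.pi / p : ℝ) : ℂ) * Complex.I := by
    push_cast; ring
  rw [omg, h, Complex.norm_exp_ofReal_mul_I]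

lemma abs_chi (p : ℕ) (a : ZMod p) : ‖chi p a‖ = 1 := by
  rw [chi, norm_pow, abs_omg, one_pow]

lemma chi_ne_zero (p : ℕ) (a : ZMod p) : chi p a ≠ 0 := by
  intro h
  have := abs_chi p a
  rw [h] at this; simp at this

lemma conj_chi_mul (p : ℕ) (a : ZMod p) : (starRingEnd ℂ) (chi p a) * chi p a = 1 := by
  rw [mul_comm, Complex.mul_conj, ← Complex.sq_norm, abs_chi]
  norm_num

lemma chi_ne_one (p : ℕ) [Fact p.Prime] (a : ZMod p) (ha : a ≠ 0) : chi p a ≠ 1 := by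
  have hp : p ≠ 0 := NeZero.ne p
  have hprim : IsPrimitiveRoot (omg p) p := Complex.isPrimitiveRoot_exp p hp
  have h1 : a.val ≠ 0 := fun h => ha ((ZMod.val_eq_zero a).1 h)
  exact hprim.pow_ne_one_of_pos_of_lt h1 (ZMod.val_lt a)

lemma chi_sum (p : ℕ) [NeZero p] {ι : Type*} (s : Finset ι) (f : ι → ZMod p) :
    chi p (∑ t ∈ s, f t) = ∏ t ∈ s, chi p (f t) := by
  induction s using Finset.cons_induction with
  | empty => simp [chi_zero]
  | cons a s ha ih => rw [Finset.sum_cons, Finset.prod_cons, chi_add, ih]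

/- ### structure of XZ acting on vectors -/

lemma XZ_mulVec (p n : ℕ) [NeZero p] (u : Fin n → ZMod p × ZMod p) (x : (Fin n → ZMod p) → ℂ)
    (j : Fin n → ZMod p) :
    (XZ p n u *ᵥ x) j
      = (∏ t, chi p ((u t).2 * (j t - (u t).1))) * x (fun t => j t - (u t).1) := by
  simp only [mulVec, dotProduct]
  rw [Finset.sum_eq_single (fun t => j t - (u t).1)]
  · congr 1
    rw [XZ]
    refine Finset.prod_congr rfl fun t _ => ?_
    rw [if_pos (by simp), chi]
  · intro i _ hi
    have : ∃ t, ¬ (j t = i t + (u t).1) := by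
      by_contra hall
      push_neg at hall
      exact hi (funext fun t => by rw [hall t]; ring)
    obtain ⟨t, ht⟩ := this
    simp only [XZ]
    have h0 : (if j t = i t + (u t).1 then omg p ^ ((u t).2 * i t).val else (0:ℂ)) = 0 :=
      if_neg ht
    rw [Finset.prod_eq_zero (Finset.mem_univ t) h0, zero_mul]
  · intro h; exact absurd (Finset.mem_univ _) h

lemma XZ_mulVec_mulVec (p n : ℕ) [NeZero p] (u v : Fin n → ZMod p × ZMod p)
    (x : (Fin n → ZMod p) → ℂ) :
    XZ p n u *ᵥ (XZ p n v *ᵥ x)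
      = chi p (∑ t, (u t).2 * (v t).1) • (XZ p n (u + v) *ᵥ x) := by
  rw [chi_sum]
  funext j
  rw [Pi.smul_apply, XZ_mulVec, XZ_mulVec, XZ_mulVec, smul_eq_mul]
  have harg : (fun t => j t - (u t).1 - (v t).1) = (fun t => j t - ((u + v) t).1) := by
    funext t; simp [Prod.fst_add]; ring
  rw [harg, ← mul_assoc, ← mul_assoc]
  congr 1
  rw [← Finset.prod_mul_distrib, ← Finset.prod_mul_distrib]
  refine Finset.prod_congr rfl fun t _ => ?_
  rw [← chi_add, ← chi_add]
  congr 1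
  simp only [Pi.add_apply, Prod.fst_add, Prod.snd_add]
  ring

lemma cinner_XZ_XZ (p n : ℕ) [NeZero p] (u : Fin n → ZMod p × ZMod p)
    (x y : (Fin n → ZMod p) → ℂ) :
    cinner (XZ p n u *ᵥ x) (XZ p n u *ᵥ y) = cinner x y := by
  simp only [cinner]
  have key : ∀ j, (starRingEnd ℂ) ((XZ p n u *ᵥ x) j) * (XZ p n u *ᵥ y) j
      = (starRingEnd ℂ) (x (fun t => j t - (u t).1)) * y (fun t => j t - (u t).1) := by
    intro j
    rw [XZ_mulVec, XZ_mulVec, _root_.map_mul]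
    have : (starRingEnd ℂ) (∏ t, chi p ((u t).2 * (j t - (u t).1)))
        * (∏ t, chi p ((u t).2 * (j t - (u t).1))) = 1 := by
      rw [map_prod, ← Finset.prod_mul_distrib]
      simp [conj_chi_mul]
    calc (starRingEnd ℂ) (∏ t, chi p ((u t).2 * (j t - (u t).1)))
          * (starRingEnd ℂ) (x fun t => j t - (u t).1)
          * ((∏ t, chi p ((u t).2 * (j t - (u t).1))) * y fun t => j t - (u t).1)
        = ((starRingEnd ℂ) (∏ t, chi p ((u t).2 * (j t - (u t).1)))
          * (∏ t, chi p ((u t).2 * (j t - (u t).1))))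
          * ((starRingEnd ℂ) (x fun t => j t - (u t).1) * y fun t => j t - (u t).1) := by ring
      _ = _ := by rw [this, one_mul]
  simp_rw [key]
  exact Fintype.sum_equiv (Equiv.piCongrRight fun t => Equiv.subRight ((u t).1))
    _ _ (fun i => rfl)

/- ### inner product algebra -/

lemma cinner_smul_left {I : Type*} [Fintype I] (a : ℂ) (x y : I → ℂ) :
    cinner (a • x) y = (starRingEnd ℂ) a * cinner x y := by
  simp [cinner, Finset.mul_sum, mul_assoc]

lemma cinner_smul_right {I : Type*} [Fintype I] (a : ℂ) (x y : I → ℂ) :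
    cinner x (a • y) = a * cinner x y := by
  simp only [cinner, Pi.smul_apply, smul_eq_mul, Finset.mul_sum]
  exact Finset.sum_congr rfl fun i _ => by ring

lemma cinner_sum_right {I : Type*} [Fintype I] {ι : Type*} (s : Finset ι) (x : I → ℂ)
    (f : ι → I → ℂ) :
    cinner x (∑ i ∈ s, f i) = ∑ i ∈ s, cinner x (f i) := by
  simp only [cinner, Finset.sum_apply, Finset.mul_sum]
  exact Finset.sum_comm

/- ### eigenvalue unimodularity and vanishing overlaps -/

lemma eig_unimodular (p n : ℕ) [NeZero p] (c : Fin n → ZMod p × ZMod p)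
    (ψ1 : (Fin n → ZMod p) → ℂ) (hψ1 : cinner ψ1 ψ1 = 1) (lam : ℂ)
    (hlam : XZ p n c *ᵥ ψ1 = lam • ψ1) :
    (starRingEnd ℂ) lam * lam = 1 := by
  have h := cinner_XZ_XZ p n c ψ1 ψ1
  rw [hlam, cinner_smul_left, cinner_smul_right, hψ1, mul_one] at h
  exact h

lemma overlap_zero (p n : ℕ) [Fact p.Prime]
    (Cmax : Submodule (ZMod p) (Fin n → ZMod p × ZMod p))
    (hmax : ∀ u, u ∈ Cmax ↔ ∀ c ∈ Cmax, symp p n c u = 0)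
    (ψ1 : (Fin n → ZMod p) → ℂ) (hψ1 : cinner ψ1 ψ1 = 1)
    (heig : ∀ c ∈ Cmax, ∃ lam : ℂ, XZ p n c *ᵥ ψ1 = lam • ψ1)
    (w : Fin n → ZMod p × ZMod p) (hw : w ∉ Cmax) :
    cinner ψ1 (XZ p n w *ᵥ ψ1) = 0 := by
  haveI : NeZero p := ⟨(Fact.out : p.Prime).ne_zero⟩
  have : ∃ c ∈ Cmax, symp p n c w ≠ 0 := by
    by_contra hall
    push_neg at hall
    exact hw ((hmax w).2 hall)
  obtain ⟨c, hcC, hcs⟩ := this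
  obtain ⟨lam, hlam⟩ := heig c hcC
  have hunim := eig_unimodular p n c ψ1 hψ1 lam hlam
  set T := cinner ψ1 (XZ p n w *ᵥ ψ1) with hT
  set σ1 : ZMod p := ∑ t, (c t).2 * (w t).1 with hσ1
  set σ2 : ZMod p := ∑ t, (w t).2 * (c t).1 with hσ2
  have h1 : XZ p n c *ᵥ (XZ p n w *ᵥ ψ1) = chi p σ1 • (XZ p n (c + w) *ᵥ ψ1) :=
    XZ_mulVec_mulVec p n c w ψ1
  have h2 : XZ p n w *ᵥ (XZ p n c *ᵥ ψ1) = chi p σ2 • (XZ p n (w + c) *ᵥ ψ1) :=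
    XZ_mulVec_mulVec p n w c ψ1
  have h3 : lam • (XZ p n w *ᵥ ψ1) = chi p σ2 • (XZ p n (w + c) *ᵥ ψ1) := by
    rw [← h2, hlam, Matrix.mulVec_smul]
  have h4 : XZ p n (c + w) *ᵥ ψ1 = (chi p σ2)⁻¹ • lam • (XZ p n w *ᵥ ψ1) := by
    rw [add_comm c w, h3, smul_smul, inv_mul_cancel₀ (chi_ne_zero p σ2), one_smul]
  have key : T = (chi p σ1 * (chi p σ2)⁻¹) * T := by
    have e1 : T = cinner (XZ p n c *ᵥ ψ1) (XZ p n c *ᵥ (XZ p n w *ᵥ ψ1)) :=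
      (cinner_XZ_XZ p n c ψ1 (XZ p n w *ᵥ ψ1)).symm
    rw [h1, hlam, h4, cinner_smul_left, cinner_smul_right, cinner_smul_right,
      cinner_smul_right, ← hT] at e1
    linear_combination e1 + (chi p σ1 * (chi p σ2)⁻¹ * T) * hunim
  have hKchi : chi p σ1 * (chi p σ2)⁻¹ = chi p (symp p n c w) := by
    have : symp p n c w + σ2 = σ1 := by
      rw [hσ1, hσ2, symp, ← Finset.sum_add_distrib]
      refine Finset.sum_congr rfl fun t _ => by ring
    rw [← this, chi_add, mul_assoc, mul_inv_cancel₀ (chi_ne_zero p σ2), mul_one]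
  rw [hKchi] at key
  have hK : chi p (symp p n c w) ≠ 1 := chi_ne_one p _ hcs
  have hz : (chi p (symp p n c w) - 1) * T = 0 := by linear_combination -key
  rcases mul_eq_zero.1 hz with h | h
  · exact absurd (sub_eq_zero.1 h) hK
  · exact h

/-- In the badcodeword construction: for every `e ∈ C^⊥`,
`|⟨ψ1, XZ(e)ψ2⟩| = p^{−k/2}`. -/
theorem badcodeword_cross_term (p n k : ℕ) [Fact p.Prime]
    (C Cmax : Submodule (ZMod p) (Fin n → ZMod p × ZMod p))
    (hkn : k ≤ n)
    (hdimC : Module.finrank (ZMod p) C = n - k)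
    (hCself : ∀ u ∈ C, ∀ c ∈ C, symp p n c u = 0)
    (hCsub : C ≤ Cmax)
    (hsub : ∀ u ∈ Cmax, ∀ c ∈ C, symp p n c u = 0)
    (hmax : ∀ u, u ∈ Cmax ↔ ∀ c ∈ Cmax, symp p n c u = 0)
    (ψ1 : (Fin n → ZMod p) → ℂ) (hψ1 : cinner ψ1 ψ1 = 1)
    (heig : ∀ c ∈ Cmax, ∃ lam : ℂ, XZ p n c *ᵥ ψ1 = lam • ψ1)
    (R : Finset (Fin n → ZMod p × ZMod p)) (h0R : 0 ∈ R)
    (hRsub : ∀ x ∈ R, ∀ c ∈ C, symp p n c x = 0)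
    (hRrep : ∀ v : Fin n → ZMod p × ZMod p, (∀ c ∈ C, symp p n c v = 0) →
      ∃! x, x ∈ R ∧ v - x ∈ Cmax)
    (ψ2 : (Fin n → ZMod p) → ℂ)
    (hψ2 : ψ2 = ((Real.sqrt (p ^ k) : ℝ) : ℂ)⁻¹ • ∑ x ∈ R, XZ p n x *ᵥ ψ1)
    (e : Fin n → ZMod p × ZMod p) (he : ∀ c ∈ C, symp p n c e = 0) :
    ‖cinner ψ1 (XZ p n e *ᵥ ψ2)‖ = (Real.sqrt (p ^ k))⁻¹ := by
  haveI : NeZero p := ⟨(Fact.out : p.Prime).ne_zero⟩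
  have hs0 : (0:ℝ) < Real.sqrt (p ^ k) := Real.sqrt_pos.2 (by
    have : 0 < p := (Fact.out : p.Prime).pos
    positivity)
  have hve : ∀ c ∈ C, symp p n c (-e) = 0 := by
    intro c hc
    have hsymp : symp p n c (-e) = - symp p n c e := by
      simp only [symp]
      rw [← Finset.sum_neg_distrib]
      exact Finset.sum_congr rfl fun t _ => by
        simp only [Pi.neg_apply, Prod.fst_neg, Prod.snd_neg]; ring
    rw [hsymp, he c hc, neg_zero]
  obtain ⟨x0, ⟨hx0R, hx0C⟩, huniq⟩ := hRrep (-e) hve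
  have hex0 : e + x0 ∈ Cmax := by
    have h := Cmax.neg_mem hx0C
    rwa [neg_sub, sub_neg_eq_add, add_comm] at h
  obtain ⟨lam, hlam⟩ := heig (e + x0) hex0
  have hunim := eig_unimodular p n (e + x0) ψ1 hψ1 lam hlam
  rw [hψ2, Matrix.mulVec_smul, cinner_smul_right]
  have hsum : XZ p n e *ᵥ (∑ x ∈ R, XZ p n x *ᵥ ψ1)
      = ∑ x ∈ R, XZ p n e *ᵥ (XZ p n x *ᵥ ψ1) := by
    simp only [← Matrix.mulVecLin_apply]
    exact map_sum _ _ _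
  rw [hsum, cinner_sum_right]
  have hterm : ∀ x, cinner ψ1 (XZ p n e *ᵥ (XZ p n x *ᵥ ψ1))
      = chi p (∑ t, (e t).2 * (x t).1) * cinner ψ1 (XZ p n (e + x) *ᵥ ψ1) := fun x => by
    rw [XZ_mulVec_mulVec, cinner_smul_right]
  have hzero : ∀ x ∈ R, x ≠ x0 → cinner ψ1 (XZ p n e *ᵥ (XZ p n x *ᵥ ψ1)) = 0 := by
    intro x hxR hne
    have hnot : e + x ∉ Cmax := by
      intro hmem
      apply hne
      refine huniq x ⟨hxR, ?_⟩
      have h := Cmax.neg_mem hmem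
      rwa [neg_add, ← sub_eq_add_neg] at h
    rw [hterm x, overlap_zero p n Cmax hmax ψ1 hψ1 heig _ hnot, mul_zero]
  rw [Finset.sum_eq_single_of_mem x0 hx0R hzero]
  rw [hterm x0, hlam, cinner_smul_right, hψ1, mul_one]
  rw [norm_mul, norm_mul, abs_chi, one_mul]
  have habs_lam : ‖lam‖ = 1 := by
    have hns : (Complex.normSq lam : ℂ) = 1 := by
      rw [← Complex.mul_conj, mul_comm]; exact hunim
    have hns' : Complex.normSq lam = 1 := by exact_mod_cast hns
    have h2 : ‖lam‖ ^ 2 = 1 := by rw [Complex.sq_norm, hns']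
    nlinarith [norm_nonneg lam]
  rw [habs_lam, mul_one, norm_inv, Complex.norm_real, Real.norm_of_nonneg hs0.le]
end

section
/- Bad codeword lemma: Let p be prime, let C ⊆ Z_p^{2n} be a linear subspace with C ⊆ C^⊥ (a stabilizer), and let λ : C → ℂ be a function such that the joint eigenspace Q = {ψ ∈ ℂ^{p^n} : XZ(c)ψ = λ(c)ψ for all c ∈ C} is nonzero (a stabilizer code). Then there exists a unit vector φ ∈ Q such that for every v ∈ Z_p^{2n} with v ∉ C, |⟨φ, XZ(v)φ⟩| ≤ 3/4. (In particular, for any fixed decoding rule, the fidelity of the decoded state for this codeword under any uncorrectable error XZ(e) is at most (3/4)² = 9/16.) -/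
open scoped BigOperators
open Matrix

set_option linter.unusedSectionVars false
set_option maxHeartbeats 2000000

namespace Bad

variable (p : ℕ) [hp : Fact p.Prime]

/-- the phase `ω^x` for `x : ZMod p`. -/
noncomputable def ph (x : ZMod p) : ℂ := omg p ^ x.val

lemma p_ne_zero : p ≠ 0 := hp.out.ne_zero

lemma omg_pow_p : omg p ^ p = 1 := by
  have hp0 : (p:ℂ) ≠ 0 := by exact_mod_cast p_ne_zero p
  rw [omg, ← Complex.exp_nat_mul, mul_comm (p:ℂ), div_mul_cancel₀ _ hp0,
    Complex.exp_two_pi_mul_I]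

lemma omg_pow_natCast (a : ℕ) : omg p ^ a = ph p ((a : ZMod p)) := by
  rw [ph, ZMod.val_natCast]
  conv_lhs => rw [← Nat.div_add_mod a p]
  rw [pow_add, pow_mul, omg_pow_p, one_pow, one_mul]

lemma ph_add (x y : ZMod p) : ph p (x + y) = ph p x * ph p y := by
  have h1 : ph p x * ph p y = omg p ^ (x.val + y.val) := (pow_add _ _ _).symm
  rw [h1, omg_pow_natCast, Nat.cast_add, ZMod.natCast_val, ZMod.natCast_val,
    ZMod.cast_id, ZMod.cast_id]

lemma ph_zero : ph p 0 = 1 := by simp [ph]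

lemma abs_omg : ‖omg p‖ = 1 := by
  rw [omg, Complex.norm_exp]
  have : (2 * Real.pi * Complex.I / p).re = 0 := by
    simp [Complex.div_re]
  rw [this, Real.exp_zero]

lemma abs_ph (x : ZMod p) : ‖ph p x‖ = 1 := by
  rw [ph, norm_pow, abs_omg, one_pow]

lemma ph_mul_ph_neg (x : ZMod p) : ph p x * ph p (-x) = 1 := by
  rw [← ph_add, add_neg_cancel, ph_zero]

lemma ph_ne_zero (x : ZMod p) : ph p x ≠ 0 := by
  intro h
  have := abs_ph p x
  rw [h] at this; simp at this

lemma star_ph (x : ZMod p) : (starRingEnd ℂ) (ph p x) = ph p (-x) := by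
  have h := Complex.inv_eq_conj (abs_ph p x)
  rw [← h, inv_eq_of_mul_eq_one_right (ph_mul_ph_neg p x)]

lemma ph_eq_one_iff (x : ZMod p) : ph p x = 1 ↔ x = 0 := by
  constructor
  · intro h
    have hprim := Complex.isPrimitiveRoot_exp p (p_ne_zero p)
    have : p ∣ x.val := by
      rw [← IsPrimitiveRoot.pow_eq_one_iff_dvd hprim]
      exact h
    exact (ZMod.val_eq_zero x).mp (Nat.eq_zero_of_dvd_of_lt this (ZMod.val_lt x))
  · intro h; rw [h, ph_zero]

end Bad

set_option linter.unusedSectionVars false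

namespace Bad

variable (p : ℕ) [hp : Fact p.Prime]

lemma ph_sum {α : Type*} (s : Finset α) (f : α → ZMod p) :
    ph p (∑ t ∈ s, f t) = ∏ t ∈ s, ph p (f t) := by
  classical
  induction s using Finset.induction with
  | empty => simp [ph_zero]
  | insert _ _ h ih => rw [Finset.sum_insert h, Finset.prod_insert h, ph_add, ih]

variable (n : ℕ)

lemma XZ_mul (u v : Fin n → ZMod p × ZMod p) :
    XZ p n u * XZ p n v = ph p (∑ t, (u t).2 * (v t).1) • XZ p n (u + v) := by
  ext j i
  rw [Matrix.mul_apply]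
  rw [Finset.sum_eq_single (fun t => i t + (v t).1)]
  · rw [Matrix.smul_apply, smul_eq_mul, ph_sum, XZ, XZ, XZ,
      ← Finset.prod_mul_distrib, ← Finset.prod_mul_distrib]
    refine Finset.prod_congr rfl ?_
    intro t _
    have harr : i t + (v t).1 + (u t).1 = i t + ((u + v) t).1 := by
      show _ = i t + ((u t).1 + (v t).1); ring
    have hsnd : ((u + v) t).2 = (u t).2 + (v t).2 := rfl
    by_cases h : j t = i t + ((u + v) t).1
    · rw [if_pos (by rw [harr]; exact h), if_pos rfl, if_pos h]
      show ph p ((u t).2 * (i t + (v t).1)) * ph p ((v t).2 * i t)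
        = ph p ((u t).2 * (v t).1) * ph p (((u + v) t).2 * i t)
      rw [← ph_add, ← ph_add, hsnd]
      congr 1; ring
    · rw [if_neg (by rw [harr]; exact h), if_neg h, zero_mul, mul_zero]
  · intro k _ hk
    obtain ⟨t, ht⟩ := Function.ne_iff.mp hk
    have h0 : XZ p n v k i = 0 := by
      rw [XZ]
      exact Finset.prod_eq_zero (Finset.mem_univ t) (if_neg ht)
    rw [h0, mul_zero]
  · intro h; exact absurd (Finset.mem_univ _) h

lemma XZ_zero : XZ p n 0 = 1 := by
  ext j i
  rw [XZ, Matrix.one_apply]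
  by_cases h : j = i
  · subst h
    rw [if_pos rfl]
    refine Finset.prod_eq_one ?_
    intro t _
    rw [if_pos (by show j t = j t + 0; rw [add_zero])]
    show omg p ^ ((0 : ZMod p) * j t).val = 1
    rw [zero_mul, ZMod.val_zero, pow_zero]
  · rw [if_neg h]
    obtain ⟨t, ht⟩ := Function.ne_iff.mp h
    refine Finset.prod_eq_zero (Finset.mem_univ t) ?_
    rw [if_neg (by show ¬ (j t = i t + 0); rw [add_zero]; exact ht)]

lemma XZ_conjT (u : Fin n → ZMod p × ZMod p) :
    (XZ p n u)ᴴ = ph p (∑ t, (u t).1 * (u t).2) • XZ p n (-u) := by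
  ext j i
  rw [Matrix.conjTranspose_apply, Matrix.smul_apply, smul_eq_mul, ph_sum, XZ, XZ,
    ← Finset.prod_mul_distrib, star_prod]
  refine Finset.prod_congr rfl ?_
  intro t _
  have h1 : ((-u) t).1 = -((u t).1) := rfl
  have h2 : ((-u) t).2 = -((u t).2) := rfl
  have hcond : (i t = j t + (u t).1) ↔ (j t = i t + ((-u) t).1) := by
    rw [h1]
    constructor <;> intro h <;> rw [h] <;> ring
  by_cases h : i t = j t + (u t).1
  · rw [if_pos h, if_pos (hcond.mp h)]
    show star (ph p ((u t).2 * j t))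
      = ph p ((u t).1 * (u t).2) * ph p (((-u) t).2 * i t)
    rw [← starRingEnd_apply, star_ph, ← ph_add, h2]
    congr 1
    rw [h]; ring
  · rw [if_neg h, if_neg (fun hc => h (hcond.mpr hc)), star_zero, mul_zero]

lemma symp_eq (u v : Fin n → ZMod p × ZMod p) :
    symp p n u v = (∑ t, (u t).2 * (v t).1) - (∑ t, (v t).2 * (u t).1) := by
  rw [symp, ← Finset.sum_sub_distrib]
  refine Finset.sum_congr rfl ?_
  intros; ring

lemma XZ_comm (u v : Fin n → ZMod p × ZMod p) :
    XZ p n u * XZ p n v = ph p (symp p n u v) • (XZ p n v * XZ p n u) := by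
  rw [XZ_mul, XZ_mul, add_comm v u, smul_smul, ← ph_add]
  congr 2
  rw [symp_eq]; ring

lemma XZ_H_mul (u : Fin n → ZMod p × ZMod p) : (XZ p n u)ᴴ * XZ p n u = 1 := by
  have hz : (∑ t, (u t).1 * (u t).2) + (∑ t, ((-u) t).2 * (u t).1) = 0 := by
    rw [← Finset.sum_add_distrib]
    refine Finset.sum_eq_zero ?_
    intro t _
    show (u t).1 * (u t).2 + (-((u t).2)) * (u t).1 = 0
    ring
  rw [XZ_conjT, Matrix.smul_mul, XZ_mul, smul_smul, ← ph_add, hz, ph_zero,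
    neg_add_cancel, XZ_zero, one_smul]

lemma XZ_mul_H (u : Fin n → ZMod p × ZMod p) : XZ p n u * (XZ p n u)ᴴ = 1 := by
  have hz : (∑ t, (u t).1 * (u t).2) + (∑ t, (u t).2 * ((-u) t).1) = 0 := by
    rw [← Finset.sum_add_distrib]
    refine Finset.sum_eq_zero ?_
    intro t _
    show (u t).1 * (u t).2 + (u t).2 * (-((u t).1)) = 0
    ring
  rw [XZ_conjT, Matrix.mul_smul, XZ_mul, smul_smul, ← ph_add, hz, ph_zero,
    add_neg_cancel, XZ_zero, one_smul]

lemma XZ_pow (u : Fin n → ZMod p × ZMod p) (r : ℕ) :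
    ∃ θ : ℂ, ‖θ‖ = 1 ∧ XZ p n u ^ r = θ • XZ p n ((r : ZMod p) • u) := by
  induction r with
  | zero =>
    refine ⟨1, by simp, ?_⟩
    rw [pow_zero, Nat.cast_zero, zero_smul, XZ_zero, one_smul]
  | succ r ih =>
    obtain ⟨θ, hθ, hpow⟩ := ih
    refine ⟨θ * ph p (∑ t, ((((r : ZMod p)) • u) t).2 * (u t).1),
      by rw [norm_mul, hθ, abs_ph, one_mul], ?_⟩
    have harg : ((r : ZMod p)) • u + u = (((r + 1 : ℕ) : ZMod p)) • u := by
      push_cast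
      rw [add_smul, one_smul]
    rw [pow_succ, hpow, Matrix.smul_mul, XZ_mul, smul_smul, harg]

end Bad
set_option linter.unusedSectionVars false

namespace Bad

section CinnerBasic

variable {I : Type*} [Fintype I] [DecidableEq I]

/-- view a plain function as an element of `EuclideanSpace`. -/
def toE (x : I → ℂ) : EuclideanSpace ℂ I := WithLp.toLp 2 x

@[simp] lemma toE_apply (x : I → ℂ) (i : I) : toE x i = x i := rfl

lemma toE_eq_zero {x : I → ℂ} (h : toE x = 0) : x = 0 := by
  funext i
  have := congrArg (fun z => z i) h
  simpa using this

lemma cinner_eq_dot (x y : I → ℂ) : cinner x y = dotProduct (star x) y := by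
  rw [cinner, dotProduct]
  refine Finset.sum_congr rfl ?_
  intro i _
  rfl

lemma cinner_add_left (x x' y : I → ℂ) : cinner (x + x') y = cinner x y + cinner x' y := by
  rw [cinner, cinner, cinner, ← Finset.sum_add_distrib]
  refine Finset.sum_congr rfl ?_
  intro i _
  show (starRingEnd ℂ) (x i + x' i) * y i = _
  rw [map_add]; ring

lemma cinner_add_right (x y y' : I → ℂ) : cinner x (y + y') = cinner x y + cinner x y' := by
  rw [cinner, cinner, cinner, ← Finset.sum_add_distrib]
  refine Finset.sum_congr rfl ?_
  intro i _
  show (starRingEnd ℂ) (x i) * (y i + y' i) = _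
  ring

lemma cinner_smul_left (a : ℂ) (x y : I → ℂ) :
    cinner (a • x) y = (starRingEnd ℂ) a * cinner x y := by
  simp [cinner, Finset.mul_sum, mul_assoc]

lemma cinner_smul_right (a : ℂ) (x y : I → ℂ) : cinner x (a • y) = a * cinner x y := by
  rw [cinner, cinner, Finset.mul_sum]
  refine Finset.sum_congr rfl ?_
  intro i _
  show (starRingEnd ℂ) (x i) * (a * y i) = _
  ring

lemma cinner_zero_left (y : I → ℂ) : cinner 0 y = 0 := by simp [cinner]

lemma cinner_conj (x y : I → ℂ) : cinner y x = (starRingEnd ℂ) (cinner x y) := by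
  simp [cinner, map_sum]
  refine Finset.sum_congr rfl ?_
  intros; ring

lemma cinner_sum_left {α : Type*} (s : Finset α) (f : α → I → ℂ) (y : I → ℂ) :
    cinner (∑ i ∈ s, f i) y = ∑ i ∈ s, cinner (f i) y := by
  classical
  induction s using Finset.induction with
  | empty => simp [cinner_zero_left]
  | insert _ _ h ih =>
    rw [Finset.sum_insert h, Finset.sum_insert h, cinner_add_left, ih]

lemma cinner_sum_right {α : Type*} (s : Finset α) (x : I → ℂ) (f : α → I → ℂ) :
    cinner x (∑ i ∈ s, f i) = ∑ i ∈ s, cinner x (f i) := by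
  classical
  induction s using Finset.induction with
  | empty => simp [cinner]
  | insert _ _ h ih =>
    rw [Finset.sum_insert h, Finset.sum_insert h, cinner_add_right, ih]

lemma cinner_mulVec (A : Matrix I I ℂ) (x y : I → ℂ) :
    cinner (A *ᵥ x) y = cinner x (Aᴴ *ᵥ y) := by
  rw [cinner_eq_dot, cinner_eq_dot, Matrix.star_mulVec, ← Matrix.dotProduct_mulVec]

lemma cinner_mulVec_right (A : Matrix I I ℂ) (x y : I → ℂ) :
    cinner x (A *ᵥ y) = cinner (Aᴴ *ᵥ x) y := by
  rw [cinner_mulVec, Matrix.conjTranspose_conjTranspose]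

lemma cinner_unitary (A : Matrix I I ℂ) (h : Aᴴ * A = 1) (x y : I → ℂ) :
    cinner (A *ᵥ x) (A *ᵥ y) = cinner x y := by
  rw [cinner_mulVec, Matrix.mulVec_mulVec, h, Matrix.one_mulVec]

lemma cinner_eq_inner (x y : I → ℂ) :
    cinner x y = @inner ℂ (EuclideanSpace ℂ I) _ (toE x) (toE y) := by
  rw [PiLp.inner_apply]
  simp [cinner, RCLike.inner_apply, mul_comm]

lemma cinner_self (x : I → ℂ) :
    cinner x x = ((‖toE x‖ : ℝ) : ℂ) ^ 2 := by
  rw [cinner_eq_inner, inner_self_eq_norm_sq_to_K]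
  norm_cast

lemma cinner_cs (x y : I → ℂ) :
    ‖cinner x y‖ ^ 2 ≤ (cinner x x).re * (cinner y y).re := by
  have h := norm_inner_le_norm (𝕜 := ℂ) (toE x) (toE y)
  have h1 : ‖cinner x y‖ = ‖@inner ℂ (EuclideanSpace ℂ I) _ (toE x) (toE y)‖ := by
    rw [cinner_eq_inner]
  have h2 : (cinner x x).re = ‖toE x‖ ^ 2 := by
    rw [cinner_self, ← Complex.ofReal_pow, Complex.ofReal_re]
  have h3 : (cinner y y).re = ‖toE y‖ ^ 2 := by
    rw [cinner_self, ← Complex.ofReal_pow, Complex.ofReal_re]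
  rw [h1, h2, h3]
  nlinarith [norm_nonneg (toE x), norm_nonneg (toE y),
    norm_nonneg (@inner ℂ (EuclideanSpace ℂ I) _ (toE x) (toE y))]

lemma exists_unit (x : I → ℂ) (hx : x ≠ 0) :
    ∃ a : ℝ, 0 < a ∧ cinner (((a : ℂ)) • x) (((a : ℂ)) • x) = 1 := by
  have hx0 : toE x ≠ 0 := fun h => hx (toE_eq_zero h)
  have hn : (0:ℝ) < ‖toE x‖ := norm_pos_iff.mpr hx0
  refine ⟨‖toE x‖⁻¹, by positivity, ?_⟩
  rw [cinner_smul_left, cinner_smul_right, cinner_self, Complex.conj_ofReal]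
  rw [← Complex.ofReal_pow, ← Complex.ofReal_mul, ← Complex.ofReal_mul, ← Complex.ofReal_one]
  congr 1
  field_simp

lemma conj_mul_self_eq_one {z : ℂ} (hz : ‖z‖ = 1) : (starRingEnd ℂ) z * z = 1 := by
  rw [mul_comm, Complex.mul_conj, ← Complex.sq_norm, hz]
  norm_num

lemma eig_abs_conj (A : Matrix I I ℂ) (hA : Aᴴ * A = 1) {x : I → ℂ} (hx : cinner x x = 1)
    {μ : ℂ} (h : A *ᵥ x = μ • x) :
    ‖μ‖ = 1 ∧ Aᴴ *ᵥ x = (starRingEnd ℂ) μ • x := by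
  have h1 : (starRingEnd ℂ) μ * μ = 1 := by
    have hu := cinner_unitary A hA x x
    rw [h, cinner_smul_left, cinner_smul_right, hx, mul_one] at hu
    exact hu
  have habs : ‖μ‖ = 1 := by
    have := congrArg (norm : ℂ → ℝ) h1
    rw [norm_mul, norm_one, Complex.norm_conj] at this
    nlinarith [norm_nonneg μ]
  have hμ0 : μ ≠ 0 := by
    intro h0; rw [h0] at habs; simp at habs
  refine ⟨habs, ?_⟩
  have h2 : Aᴴ *ᵥ (A *ᵥ x) = x := by
    rw [Matrix.mulVec_mulVec, hA, Matrix.one_mulVec]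
  rw [h, Matrix.mulVec_smul] at h2
  have h3 : Aᴴ *ᵥ x = μ⁻¹ • x := by
    conv_rhs => rw [← h2]
    rw [smul_smul, inv_mul_cancel₀ hμ0, one_smul]
  rw [h3, Complex.inv_eq_conj habs]

end CinnerBasic

section Overlap

variable (p n : ℕ) [hp : Fact p.Prime]

lemma zero_overlap (M : Submodule (ZMod p) (Fin n → ZMod p × ZMod p))
    (hmax : ∀ v, (∀ c ∈ M, symp p n c v = 0) → v ∈ M)
    (φ : (Fin n → ZMod p) → ℂ) (hφ : cinner φ φ = 1)
    (heig : ∀ c ∈ M, ∃ μ : ℂ, XZ p n c *ᵥ φ = μ • φ)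
    (v : Fin n → ZMod p × ZMod p) (hv : v ∉ M) : cinner φ (XZ p n v *ᵥ φ) = 0 := by
  obtain ⟨c, hc, hs⟩ : ∃ c ∈ M, symp p n c v ≠ 0 := by
    by_contra h
    push_neg at h
    exact hv (hmax v h)
  obtain ⟨μ, hμ⟩ := heig c hc
  obtain ⟨habs, hconj⟩ := eig_abs_conj _ (XZ_H_mul p n c) hφ hμ
  have hμ0 : μ ≠ 0 := by
    intro h0; rw [h0] at habs; simp at habs
  have way2 : cinner φ ((XZ p n c * XZ p n v) *ᵥ φ)
      = μ * cinner φ (XZ p n v *ᵥ φ) := by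
    rw [← Matrix.mulVec_mulVec, cinner_mulVec_right, hconj, cinner_smul_left,
      Complex.conj_conj]
  have way1 : cinner φ ((XZ p n c * XZ p n v) *ᵥ φ)
      = ph p (symp p n c v) * μ * cinner φ (XZ p n v *ᵥ φ) := by
    rw [XZ_comm, Matrix.smul_mulVec, cinner_smul_right, ← Matrix.mulVec_mulVec,
      hμ, Matrix.mulVec_smul, cinner_smul_right]
    ring
  have heq := way1.symm.trans way2
  have hfac : (ph p (symp p n c v) - 1) * (μ * cinner φ (XZ p n v *ᵥ φ)) = 0 := by
    linear_combination heq
  rcases mul_eq_zero.mp hfac with h1 | h2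
  · exact absurd ((ph_eq_one_iff p _).mp (sub_eq_zero.mp h1)) hs
  · rcases mul_eq_zero.mp h2 with h3 | h4
    · exact absurd h3 hμ0
    · exact h4

end Overlap

end Bad
set_option linter.unusedSectionVars false
set_option maxHeartbeats 1000000

namespace Bad

section Gram

variable {I : Type*} [Fintype I] [DecidableEq I]

lemma gram_shift (A : Matrix I I ℂ) (hAH : Aᴴ * A = 1) (hAAH : A * Aᴴ = 1)
    (φ : I → ℂ) (s t : ℕ) :
    cinner ((Aᴴ) ^ (s+1) *ᵥ φ) ((Aᴴ) ^ (t+1) *ᵥ φ)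
      = cinner ((Aᴴ) ^ s *ᵥ φ) ((Aᴴ) ^ t *ᵥ φ) := by
  have key : ∀ r : ℕ, A * (Aᴴ) ^ (r+1) = (Aᴴ) ^ r := by
    intro r
    rw [pow_succ', ← mul_assoc, hAAH, one_mul]
  have hu := cinner_unitary A hAH ((Aᴴ) ^ (s+1) *ᵥ φ) ((Aᴴ) ^ (t+1) *ᵥ φ)
  rw [Matrix.mulVec_mulVec, Matrix.mulVec_mulVec, key, key] at hu
  exact hu.symm

lemma gram_drop (A : Matrix I I ℂ) (hAH : Aᴴ * A = 1) (hAAH : A * Aᴴ = 1)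
    (φ : I → ℂ) (s d : ℕ) :
    cinner ((Aᴴ) ^ s *ᵥ φ) ((Aᴴ) ^ (s + d) *ᵥ φ) = cinner φ ((Aᴴ) ^ d *ᵥ φ) := by
  induction s with
  | zero => rw [pow_zero, Matrix.one_mulVec, zero_add]
  | succ s ih =>
    have harr : s + 1 + d = (s + d) + 1 := by omega
    rw [harr, gram_shift A hAH hAAH, ih]

end Gram

section OverlapBound

variable (p n : ℕ) [hp : Fact p.Prime]

lemma overlap (M₀ : Submodule (ZMod p) (Fin n → ZMod p × ZMod p))
    (hmax₀ : ∀ v, (∀ c ∈ M₀, symp p n c v = 0) → v ∈ M₀)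
    (φ₀ : (Fin n → ZMod p) → ℂ) (hφ₀ : cinner φ₀ φ₀ = 1)
    (heig₀ : ∀ c ∈ M₀, ∃ μ : ℂ, XZ p n c *ᵥ φ₀ = μ • φ₀)
    (w : Fin n → ZMod p × ZMod p) (hw : w ∉ M₀)
    (x : (Fin n → ZMod p) → ℂ) (hx : cinner x x = 1)
    (ν : ℂ) (hν : XZ p n w *ᵥ x = ν • x) :
    ‖cinner φ₀ x‖ ≤ 3 / 4 := by
  classical
  have hAH : (XZ p n w)ᴴ * XZ p n w = 1 := XZ_H_mul p n w
  have hAAH : XZ p n w * (XZ p n w)ᴴ = 1 := XZ_mul_H p n w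
  have hνabs : ‖ν‖ = 1 := (eig_abs_conj _ hAH hx hν).1
  have hνt : ∀ t : ℕ, (starRingEnd ℂ) (ν ^ t) * ν ^ t = 1 := by
    intro t
    exact conj_mul_self_eq_one (by rw [norm_pow, hνabs, one_pow])
  have hpowx : ∀ t : ℕ, (XZ p n w) ^ t *ᵥ x = ν ^ t • x := by
    intro t
    induction t with
    | zero => rw [pow_zero, pow_zero, Matrix.one_mulVec, one_smul]
    | succ t ih =>
      rw [pow_succ, ← Matrix.mulVec_mulVec, hν, Matrix.mulVec_smul, ih, smul_smul,
        ← pow_succ']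
  have hvan : ∀ r : ℕ, 0 < r → r < p → cinner φ₀ ((XZ p n w) ^ r *ᵥ φ₀) = 0 := by
    intro r h1 h2
    obtain ⟨θ, hθ, hpow⟩ := XZ_pow p n w r
    have hr0 : ((r : ZMod p)) ≠ 0 := by
      rw [Ne, ZMod.natCast_eq_zero_iff]
      exact fun hd => absurd (Nat.le_of_dvd h1 hd) (not_le.mpr h2)
    have hrw : ((r : ZMod p)) • w ∉ M₀ := by
      intro hmem
      apply hw
      have hsm := M₀.smul_mem ((r : ZMod p))⁻¹ hmem
      rwa [smul_smul, inv_mul_cancel₀ hr0, one_smul] at hsm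
    rw [hpow, Matrix.smul_mulVec, cinner_smul_right,
      zero_overlap p n M₀ hmax₀ φ₀ hφ₀ heig₀ _ hrw, mul_zero]
  -- the Gram entries
  have hf0 : ∀ d : ℕ, 0 < d → d < p → cinner φ₀ (((XZ p n w)ᴴ) ^ d *ᵥ φ₀) = 0 := by
    intro d h1 h2
    rw [← Matrix.conjTranspose_pow, ← cinner_mulVec, cinner_conj, hvan d h1 h2, map_zero]
  have hfd : ∀ s t : ℕ, s < p → t < p →
      cinner (((XZ p n w)ᴴ) ^ s *ᵥ φ₀) (((XZ p n w)ᴴ) ^ t *ᵥ φ₀)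
        = if s = t then 1 else 0 := by
    intro s t hs ht
    rcases lt_trichotomy s t with h | h | h
    · rw [if_neg (by omega)]
      have harr : t = s + (t - s) := by omega
      rw [harr, gram_drop _ hAH hAAH, hf0 (t - s) (by omega) (by omega)]
    · subst h
      rw [if_pos rfl]
      have := gram_drop (XZ p n w) hAH hAAH φ₀ s 0
      rw [add_zero, pow_zero, Matrix.one_mulVec, hφ₀] at this
      exact this
    · rw [if_neg (by omega), cinner_conj]
      have harr : s = t + (s - t) := by omega
      rw [harr, gram_drop _ hAH hAAH, hf0 (s - t) (by omega) (by omega), map_zero]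
  -- the vector y
  set y : (Fin n → ZMod p) → ℂ :=
    ∑ t ∈ Finset.range p, ν ^ t • (((XZ p n w)ᴴ) ^ t *ᵥ φ₀) with hy
  have hyx : cinner y x = (p : ℂ) * cinner φ₀ x := by
    rw [hy, cinner_sum_left]
    have hterm : ∀ t ∈ Finset.range p,
        cinner (ν ^ t • (((XZ p n w)ᴴ) ^ t *ᵥ φ₀)) x = cinner φ₀ x := by
      intro t _
      rw [cinner_smul_left, cinner_mulVec, Matrix.conjTranspose_pow,
        Matrix.conjTranspose_conjTranspose, hpowx, cinner_smul_right, ← mul_assoc,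
        hνt, one_mul]
    rw [Finset.sum_congr rfl hterm, Finset.sum_const, Finset.card_range, nsmul_eq_mul]
  have hyy : cinner y y = (p : ℂ) := by
    rw [hy, cinner_sum_left]
    have hterm : ∀ s ∈ Finset.range p,
        cinner (ν ^ s • (((XZ p n w)ᴴ) ^ s *ᵥ φ₀)) y = 1 := by
      intro s hs
      rw [cinner_smul_left, hy, cinner_sum_right]
      have hterm2 : ∀ t ∈ Finset.range p,
          cinner (((XZ p n w)ᴴ) ^ s *ᵥ φ₀) (ν ^ t • (((XZ p n w)ᴴ) ^ t *ᵥ φ₀))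
            = ν ^ t * (if s = t then 1 else 0) := by
        intro t ht
        rw [cinner_smul_right, hfd s t (Finset.mem_range.mp hs) (Finset.mem_range.mp ht)]
      rw [Finset.sum_congr rfl hterm2, Finset.sum_eq_single s]
      · rw [if_pos rfl, mul_one]
        exact hνt s
      · intro t ht hts
        rw [if_neg (fun hh => hts hh.symm), mul_zero]
      · intro hc; exact absurd hs hc
    rw [Finset.sum_congr rfl hterm, Finset.sum_const, Finset.card_range, nsmul_eq_mul,
      mul_one]
  have hcs := cinner_cs y x
  rw [hyx, hyy, hx] at hcs
  have hre : ((p : ℂ)).re = (p : ℝ) := by simp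
  rw [hre, Complex.one_re, mul_one] at hcs
  have habs : ‖(p:ℂ) * cinner φ₀ x‖ = (p:ℝ) * ‖cinner φ₀ x‖ := by
    rw [norm_mul, Complex.norm_natCast]
  rw [habs] at hcs
  have hp2 : (2:ℝ) ≤ (p:ℝ) := by exact_mod_cast hp.out.two_le
  have ha : 0 ≤ ‖cinner φ₀ x‖ := norm_nonneg _
  set a := ‖cinner φ₀ x‖ with hadef
  by_contra hcon
  push_neg at hcon
  have hp0 : (0:ℝ) < (p:ℝ) := by linarith
  have haa : (9:ℝ)/16 < a * a := by nlinarith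
  have hpp : (2:ℝ) * (p:ℝ) ≤ (p:ℝ) * (p:ℝ) := by nlinarith
  have hkey : (p:ℝ) * (p:ℝ) * (9/16) ≤ (p:ℝ) * (p:ℝ) * (a * a) := by
    have h' := mul_le_mul_of_nonneg_left (le_of_lt haa) (le_of_lt (mul_pos hp0 hp0))
    linarith
  have hexp : ((p:ℝ) * a)^2 = (p:ℝ) * (p:ℝ) * (a * a) := by ring
  nlinarith [hcs, hkey, hpp, hp0, hexp]

end OverlapBound

end Bad
set_option linter.unusedSectionVars false
set_option maxHeartbeats 1000000

namespace Bad

section Symplectic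

variable (p n : ℕ) [hp : Fact p.Prime]

lemma symp_add_left (u u' v : Fin n → ZMod p × ZMod p) :
    symp p n (u + u') v = symp p n u v + symp p n u' v := by
  rw [symp, symp, symp, ← Finset.sum_add_distrib]
  refine Finset.sum_congr rfl ?_
  intro t _
  show ((u + u') t).2 * (v t).1 - ((u + u') t).1 * (v t).2 = _
  have h1 : ((u + u') t).1 = (u t).1 + (u' t).1 := rfl
  have h2 : ((u + u') t).2 = (u t).2 + (u' t).2 := rfl
  rw [h1, h2]; ring

lemma symp_smul_left (a : ZMod p) (u v : Fin n → ZMod p × ZMod p) :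
    symp p n (a • u) v = a * symp p n u v := by
  rw [symp, symp, Finset.mul_sum]
  refine Finset.sum_congr rfl ?_
  intro t _
  show ((a • u) t).2 * (v t).1 - ((a • u) t).1 * (v t).2 = _
  have h1 : ((a • u) t).1 = a * (u t).1 := rfl
  have h2 : ((a • u) t).2 = a * (u t).2 := rfl
  rw [h1, h2]; ring

lemma symp_add_right (u v v' : Fin n → ZMod p × ZMod p) :
    symp p n u (v + v') = symp p n u v + symp p n u v' := by
  rw [symp, symp, symp, ← Finset.sum_add_distrib]
  refine Finset.sum_congr rfl ?_
  intro t _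
  show (u t).2 * ((v + v') t).1 - (u t).1 * ((v + v') t).2 = _
  have h1 : ((v + v') t).1 = (v t).1 + (v' t).1 := rfl
  have h2 : ((v + v') t).2 = (v t).2 + (v' t).2 := rfl
  rw [h1, h2]; ring

lemma symp_smul_right (a : ZMod p) (u v : Fin n → ZMod p × ZMod p) :
    symp p n u (a • v) = a * symp p n u v := by
  rw [symp, symp, Finset.mul_sum]
  refine Finset.sum_congr rfl ?_
  intro t _
  show (u t).2 * ((a • v) t).1 - (u t).1 * ((a • v) t).2 = _
  have h1 : ((a • v) t).1 = a * (v t).1 := rfl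
  have h2 : ((a • v) t).2 = a * (v t).2 := rfl
  rw [h1, h2]; ring

lemma symp_self (u : Fin n → ZMod p × ZMod p) : symp p n u u = 0 := by
  rw [symp]
  refine Finset.sum_eq_zero ?_
  intro t _
  ring

lemma symp_anti (u v : Fin n → ZMod p × ZMod p) : symp p n v u = - symp p n u v := by
  rw [symp, symp, ← Finset.sum_neg_distrib]
  refine Finset.sum_congr rfl ?_
  intro t _
  ring

noncomputable def sympB : LinearMap.BilinForm (ZMod p) (Fin n → ZMod p × ZMod p) :=
  LinearMap.mk₂ (ZMod p) (symp p n) (symp_add_left p n) (symp_smul_left p n)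
    (symp_add_right p n) (symp_smul_right p n)

@[simp] lemma sympB_apply (u v : Fin n → ZMod p × ZMod p) :
    sympB p n u v = symp p n u v := rfl

lemma sympB_refl : (sympB p n).IsRefl := by
  intro u v h
  rw [sympB_apply] at h ⊢
  rw [symp_anti, h, neg_zero]

lemma sympB_nondeg : (sympB p n).Nondegenerate := by
  suffices hL : (sympB p n).SeparatingLeft from
    ⟨hL, fun u hu => hL u (fun y => sympB_refl p n _ _ (hu y))⟩
  intro u hu
  funext t
  have h1 := hu (Function.update (0 : Fin n → ZMod p × ZMod p) t ((1 : ZMod p), (0 : ZMod p)))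
  have h2 := hu (Function.update (0 : Fin n → ZMod p × ZMod p) t ((0 : ZMod p), (1 : ZMod p)))
  rw [sympB_apply, symp] at h1 h2
  rw [Finset.sum_eq_single t] at h1 h2
  · rw [Function.update_self] at h1 h2
    simp only [mul_one, mul_zero, sub_zero, zero_sub, neg_eq_zero] at h1 h2
    show u t = (0, 0)
    have : u t = ((u t).1, (u t).2) := rfl
    rw [this, h1, h2]
  · intro s _ hst
    rw [Function.update_of_ne hst]
    show (u s).2 * ((0:Fin n → ZMod p × ZMod p) s).1 - (u s).1 * ((0:Fin n → ZMod p × ZMod p) s).2 = 0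
    have : (0:Fin n → ZMod p × ZMod p) s = (0, 0) := rfl
    rw [this]
    simp
  · intro h; exact absurd (Finset.mem_univ t) h
  · intro s _ hst
    rw [Function.update_of_ne hst]
    show (u s).2 * ((0:Fin n → ZMod p × ZMod p) s).1 - (u s).1 * ((0:Fin n → ZMod p × ZMod p) s).2 = 0
    have : (0:Fin n → ZMod p × ZMod p) s = (0, 0) := rfl
    rw [this]
    simp
  · intro h; exact absurd (Finset.mem_univ t) h

lemma symp_sub_right (c x y : Fin n → ZMod p × ZMod p) :
    symp p n c (x - y) = symp p n c x - symp p n c y := by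
  have h := LinearMap.map_sub ((sympB p n) c) x y
  simpa using h

/-- Greedy extension towards a self-dual subspace, keeping intersection with a
self-dual `M` fixed. -/
lemma grow1 (M : Submodule (ZMod p) (Fin n → ZMod p × ZMod p))
    (hMiso : ∀ a ∈ M, ∀ b ∈ M, symp p n a b = 0) :
    ∀ (k : ℕ) (D : Submodule (ZMod p) (Fin n → ZMod p × ZMod p)),
      (∀ a ∈ D, ∀ b ∈ D, symp p n a b = 0) →
      Module.finrank (ZMod p) (Fin n → ZMod p × ZMod p) ≤ Module.finrank (ZMod p) D + k →
      ∃ M' : Submodule (ZMod p) (Fin n → ZMod p × ZMod p), D ≤ M' ∧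
        (∀ a ∈ M', ∀ b ∈ M', symp p n a b = 0) ∧
        (∀ v, (∀ c ∈ M', symp p n c v = 0) → v ∈ M') ∧
        M' ⊓ M = D ⊓ M := by
  intro k
  induction k with
  | zero =>
    intro D hDiso hrank
    by_cases hsd : ∀ v, (∀ c ∈ D, symp p n c v = 0) → v ∈ D
    · exact ⟨D, le_refl D, hDiso, hsd, rfl⟩
    · exfalso
      push_neg at hsd
      obtain ⟨v₀, hv₀orth, hv₀⟩ := hsd
      have hlt : D < D ⊔ Submodule.span (ZMod p) {v₀} := by
        refine lt_of_le_of_ne le_sup_left ?_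
        intro heq
        apply hv₀
        rw [heq]
        exact Submodule.mem_sup_right (Submodule.mem_span_singleton_self v₀)
      have h1 := Submodule.finrank_lt_finrank_of_lt hlt
      have h2 := Submodule.finrank_le (D ⊔ Submodule.span (ZMod p) {v₀})
      omega
  | succ k ih =>
    intro D hDiso hrank
    by_cases hsd : ∀ v, (∀ c ∈ D, symp p n c v = 0) → v ∈ D
    · exact ⟨D, le_refl D, hDiso, hsd, rfl⟩
    · push_neg at hsd
      obtain ⟨v₀, hv₀orth, hv₀D⟩ := hsd
      have hstep : ∃ x, (∀ c ∈ D, symp p n c x = 0) ∧ x ∉ M ⊔ D := by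
        by_contra hno
        push_neg at hno
        obtain ⟨m, hm, d, hd, hmd⟩ := Submodule.mem_sup.mp (hno v₀ hv₀orth)
        have hmval : m = v₀ - d := by rw [← hmd]; abel
        have hmorth : ∀ c ∈ D, symp p n c m = 0 := by
          intro c hc
          rw [hmval, symp_sub_right, hv₀orth c hc, hDiso c hc d hd, sub_zero]
        have hmorth2 : m ∈ (sympB p n).orthogonal (M ⊔ D) := by
          intro y hy
          obtain ⟨m', hm', d', hd', rfl⟩ := Submodule.mem_sup.mp hy
          show sympB p n (m' + d') m = 0
          rw [sympB_apply, symp_add_left, hMiso m' hm' m hm, hmorth d' hd', add_zero]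
        have hsub : (sympB p n).orthogonal D ≤ M ⊔ D := by
          intro z hz
          exact hno z (fun c hc => hz c hc)
        have hm4 : m ∈ (sympB p n).orthogonal ((sympB p n).orthogonal D) :=
          LinearMap.BilinForm.orthogonal_le hsub hmorth2
        rw [LinearMap.BilinForm.orthogonal_orthogonal (sympB_nondeg p n) (sympB_refl p n)]
          at hm4
        apply hv₀D
        rw [← hmd]
        exact D.add_mem hm4 hd
      obtain ⟨x, hxorth, hxMD⟩ := hstep
      have hxD : x ∉ D := fun h => hxMD (Submodule.mem_sup_right h)
      have hmemD' : ∀ z ∈ D ⊔ Submodule.span (ZMod p) {x},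
          ∃ d ∈ D, ∃ s : ZMod p, z = d + s • x := by
        intro z hz
        obtain ⟨d, hd, sx, hsx, hzd⟩ := Submodule.mem_sup.mp hz
        obtain ⟨s, rfl⟩ := Submodule.mem_span_singleton.mp hsx
        exact ⟨d, hd, s, hzd.symm⟩
      have hD'iso : ∀ a ∈ D ⊔ Submodule.span (ZMod p) {x},
          ∀ b ∈ D ⊔ Submodule.span (ZMod p) {x}, symp p n a b = 0 := by
        intro a ha b hb
        obtain ⟨da, hda, s, rfl⟩ := hmemD' a ha
        obtain ⟨db, hdb, t, rfl⟩ := hmemD' b hb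
        rw [symp_add_left, symp_add_right, symp_add_right, symp_smul_left,
          symp_smul_left, symp_smul_right, symp_smul_right]
        rw [hDiso da hda db hdb, hxorth da hda,
          show symp p n x db = 0 by rw [symp_anti, hxorth db hdb, neg_zero],
          symp_self]
        ring
      have hD'M : (D ⊔ Submodule.span (ZMod p) {x}) ⊓ M = D ⊓ M := by
        refine le_antisymm ?_ (inf_le_inf_right M le_sup_left)
        rintro z ⟨hzD', hzM⟩
        obtain ⟨d, hd, s, rfl⟩ := hmemD' z hzD'
        by_cases hs : s = 0
        · subst hs
          rw [zero_smul, add_zero]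
          exact ⟨hd, by rwa [zero_smul, add_zero] at hzM⟩
        · exfalso
          apply hxMD
          have hxval : x = s⁻¹ • ((d + s • x) - d) := by
            rw [add_sub_cancel_left, smul_smul, inv_mul_cancel₀ hs, one_smul]
          rw [hxval]
          apply Submodule.smul_mem
          apply Submodule.sub_mem
          · exact Submodule.mem_sup_left hzM
          · exact Submodule.mem_sup_right hd
      have hlt : D < D ⊔ Submodule.span (ZMod p) {x} := by
        refine lt_of_le_of_ne le_sup_left ?_
        intro heq
        apply hxD
        rw [heq]
        exact Submodule.mem_sup_right (Submodule.mem_span_singleton_self x)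
      have hrank' : Module.finrank (ZMod p) (Fin n → ZMod p × ZMod p)
          ≤ Module.finrank (ZMod p) (D ⊔ Submodule.span (ZMod p) {x} :
            Submodule (ZMod p) (Fin n → ZMod p × ZMod p)) + k := by
        have := Submodule.finrank_lt_finrank_of_lt hlt
        omega
      obtain ⟨M', hM'1, hM'2, hM'3, hM'4⟩ := ih (D ⊔ Submodule.span (ZMod p) {x})
        hD'iso hrank'
      exact ⟨M', le_trans le_sup_left hM'1, hM'2, hM'3, by rw [hM'4, hD'M]⟩

/-- Greedy extension towards a self-dual subspace (no constraint). -/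
lemma grow0 : ∀ (k : ℕ) (D : Submodule (ZMod p) (Fin n → ZMod p × ZMod p)),
    (∀ a ∈ D, ∀ b ∈ D, symp p n a b = 0) →
    Module.finrank (ZMod p) (Fin n → ZMod p × ZMod p) ≤ Module.finrank (ZMod p) D + k →
    ∃ M' : Submodule (ZMod p) (Fin n → ZMod p × ZMod p), D ≤ M' ∧
      (∀ a ∈ M', ∀ b ∈ M', symp p n a b = 0) ∧
      (∀ v, (∀ c ∈ M', symp p n c v = 0) → v ∈ M') := by
  intro k
  induction k with
  | zero =>
    intro D hDiso hrank
    by_cases hsd : ∀ v, (∀ c ∈ D, symp p n c v = 0) → v ∈ D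
    · exact ⟨D, le_refl D, hDiso, hsd⟩
    · exfalso
      push_neg at hsd
      obtain ⟨v₀, hv₀orth, hv₀⟩ := hsd
      have hlt : D < D ⊔ Submodule.span (ZMod p) {v₀} := by
        refine lt_of_le_of_ne le_sup_left ?_
        intro heq
        apply hv₀
        rw [heq]
        exact Submodule.mem_sup_right (Submodule.mem_span_singleton_self v₀)
      have h1 := Submodule.finrank_lt_finrank_of_lt hlt
      have h2 := Submodule.finrank_le (D ⊔ Submodule.span (ZMod p) {v₀})
      omega
  | succ k ih =>
    intro D hDiso hrank
    by_cases hsd : ∀ v, (∀ c ∈ D, symp p n c v = 0) → v ∈ D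
    · exact ⟨D, le_refl D, hDiso, hsd⟩
    · push_neg at hsd
      obtain ⟨x, hxorth, hxD⟩ := hsd
      have hmemD' : ∀ z ∈ D ⊔ Submodule.span (ZMod p) {x},
          ∃ d ∈ D, ∃ s : ZMod p, z = d + s • x := by
        intro z hz
        obtain ⟨d, hd, sx, hsx, hzd⟩ := Submodule.mem_sup.mp hz
        obtain ⟨s, rfl⟩ := Submodule.mem_span_singleton.mp hsx
        exact ⟨d, hd, s, hzd.symm⟩
      have hD'iso : ∀ a ∈ D ⊔ Submodule.span (ZMod p) {x},
          ∀ b ∈ D ⊔ Submodule.span (ZMod p) {x}, symp p n a b = 0 := by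
        intro a ha b hb
        obtain ⟨da, hda, s, rfl⟩ := hmemD' a ha
        obtain ⟨db, hdb, t, rfl⟩ := hmemD' b hb
        rw [symp_add_left, symp_add_right, symp_add_right, symp_smul_left,
          symp_smul_left, symp_smul_right, symp_smul_right]
        rw [hDiso da hda db hdb, hxorth da hda,
          show symp p n x db = 0 by rw [symp_anti, hxorth db hdb, neg_zero],
          symp_self]
        ring
      have hlt : D < D ⊔ Submodule.span (ZMod p) {x} := by
        refine lt_of_le_of_ne le_sup_left ?_
        intro heq
        apply hxD
        rw [heq]
        exact Submodule.mem_sup_right (Submodule.mem_span_singleton_self x)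
      have hrank' : Module.finrank (ZMod p) (Fin n → ZMod p × ZMod p)
          ≤ Module.finrank (ZMod p) (D ⊔ Submodule.span (ZMod p) {x} :
            Submodule (ZMod p) (Fin n → ZMod p × ZMod p)) + k := by
        have := Submodule.finrank_lt_finrank_of_lt hlt
        omega
      obtain ⟨M', hM'1, hM'2, hM'3⟩ := ih (D ⊔ Submodule.span (ZMod p) {x}) hD'iso hrank'
      exact ⟨M', le_trans le_sup_left hM'1, hM'2, hM'3⟩

end Symplectic

end Bad
set_option linter.unusedSectionVars false
set_option maxHeartbeats 1000000

namespace Bad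

section Eigen

variable (p n : ℕ) [hp : Fact p.Prime]

noncomputable def eigSub (A : Matrix (Fin n → ZMod p) (Fin n → ZMod p) ℂ) (μ : ℂ) :
    Submodule ℂ ((Fin n → ZMod p) → ℂ) :=
  LinearMap.ker (A.mulVecLin - μ • LinearMap.id)

lemma mem_eigSub {A : Matrix (Fin n → ZMod p) (Fin n → ZMod p) ℂ} {μ : ℂ}
    {x : (Fin n → ZMod p) → ℂ} : x ∈ eigSub p n A μ ↔ A *ᵥ x = μ • x := by
  rw [eigSub, LinearMap.mem_ker, LinearMap.sub_apply, Matrix.mulVecLin_apply,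
    LinearMap.smul_apply, LinearMap.id_apply, sub_eq_zero]

lemma exists_joint (C : Submodule (ZMod p) (Fin n → ZMod p × ZMod p)) (lam : C → ℂ)
    (M : Submodule (ZMod p) (Fin n → ZMod p × ZMod p))
    (hiso : ∀ a ∈ M, ∀ b ∈ M, symp p n a b = 0)
    (hCM : C ≤ M)
    (ψ : (Fin n → ZMod p) → ℂ) (hψ0 : ψ ≠ 0)
    (hψ : ∀ c : C, XZ p n c.val *ᵥ ψ = lam c • ψ) :
    ∃ φ : (Fin n → ZMod p) → ℂ, φ ≠ 0 ∧ (∀ c : C, XZ p n c.val *ᵥ φ = lam c • φ) ∧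
      ∀ x ∈ M, ∃ μ : ℂ, XZ p n x *ᵥ φ = μ • φ := by
  classical
  suffices h : ∀ S : Finset (Fin n → ZMod p × ZMod p), (∀ x ∈ S, x ∈ M) →
      ∃ φ : (Fin n → ZMod p) → ℂ, φ ≠ 0 ∧
        (∀ c : C, XZ p n c.val *ᵥ φ = lam c • φ) ∧
        ∀ x ∈ S, ∃ μ : ℂ, XZ p n x *ᵥ φ = μ • φ by
    obtain ⟨φ, h1, h2, h3⟩ := h (Set.toFinset (M : Set _))
      (fun x hx => by simpa [Set.mem_toFinset] using hx)
    exact ⟨φ, h1, h2, fun x hx => h3 x (by simpa [Set.mem_toFinset] using hx)⟩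
  intro S
  induction S using Finset.induction with
  | empty => intro _; exact ⟨ψ, hψ0, hψ, by simp⟩
  | @insert w S hwS ih =>
    intro hsub
    have hSsub : ∀ x ∈ S, x ∈ M := by
      intro x hx; exact hsub x (Finset.mem_insert_of_mem hx)
    obtain ⟨φ', h1, h2, h3⟩ := ih hSsub
    have hwM : w ∈ M := hsub w (Finset.mem_insert_self w S)
    choose χ hχ using h3
    set Qf : Submodule ℂ ((Fin n → ZMod p) → ℂ) :=
      (⨅ c : C, eigSub p n (XZ p n c.val) (lam c)) ⊓
      (⨅ x : {x // x ∈ S}, eigSub p n (XZ p n x.val) (χ x.val x.prop)) with hQf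
    have hmemQf : ∀ z, z ∈ Qf ↔ ((∀ c : C, XZ p n c.val *ᵥ z = lam c • z) ∧
        ∀ x : {x // x ∈ S}, XZ p n x.val *ᵥ z = χ x.val x.prop • z) := by
      intro z
      rw [hQf, Submodule.mem_inf, Submodule.mem_iInf, Submodule.mem_iInf]
      simp only [mem_eigSub]
    have hφ'Qf : φ' ∈ Qf := by
      rw [hmemQf]
      exact ⟨h2, fun x => hχ x.val x.prop⟩
    have hinv : ∀ z ∈ Qf, (XZ p n w).mulVecLin z ∈ Qf := by
      intro z hz
      rw [hmemQf] at hz ⊢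
      obtain ⟨hz1, hz2⟩ := hz
      constructor
      · intro c
        have hcomm : XZ p n c.val * XZ p n w = XZ p n w * XZ p n c.val := by
          rw [XZ_comm, hiso c.val (hCM c.prop) w hwM, ph_zero, one_smul]
        rw [Matrix.mulVecLin_apply, Matrix.mulVec_mulVec, hcomm, ← Matrix.mulVec_mulVec,
          hz1 c, Matrix.mulVec_smul]
      · intro x
        have hcomm : XZ p n x.val * XZ p n w = XZ p n w * XZ p n x.val := by
          rw [XZ_comm, hiso x.val (hSsub x.val x.prop) w hwM, ph_zero, one_smul]
        rw [Matrix.mulVecLin_apply, Matrix.mulVec_mulVec, hcomm, ← Matrix.mulVec_mulVec,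
          hz2 x, Matrix.mulVec_smul]
    have hnt : Nontrivial Qf :=
      ⟨⟨⟨φ', hφ'Qf⟩, 0, fun h => h1 (by simpa using congrArg Subtype.val h)⟩⟩
    set T : Qf →ₗ[ℂ] Qf := ((XZ p n w).mulVecLin).restrict hinv with hT
    obtain ⟨μ, hμ⟩ := Module.End.exists_eigenvalue T
    obtain ⟨z, hz⟩ := hμ.exists_hasEigenvector
    have hzval : XZ p n w *ᵥ z.val = μ • z.val := by
      have h := Module.End.mem_eigenspace_iff.mp hz.1
      have h2 := congrArg Subtype.val h
      rw [hT] at h2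
      simpa [LinearMap.restrict_apply, Matrix.mulVecLin_apply] using h2
    have hzQf := z.prop
    rw [hmemQf] at hzQf
    refine ⟨z.val, ?_, hzQf.1, ?_⟩
    · intro h
      exact hz.2 (Subtype.ext h)
    · intro x hx
      rcases Finset.mem_insert.mp hx with rfl | hxS
      · exact ⟨μ, hzval⟩
      · exact ⟨χ x hxS, hzQf.2 ⟨x, hxS⟩⟩

end Eigen

end Bad

/-- Bad codeword lemma: a nontrivial stabilizer code contains a unit codeword `φ`
such that `|⟨φ, XZ(v)φ⟩| ≤ 3/4` for every `v ∉ C`. -/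
theorem badcodeword (p n : ℕ) [Fact p.Prime]
    (C : Submodule (ZMod p) (Fin n → ZMod p × ZMod p))
    (hCself : ∀ u ∈ C, ∀ c ∈ C, symp p n c u = 0)
    (lam : C → ℂ)
    (hQ : ∃ ψ : (Fin n → ZMod p) → ℂ, ψ ≠ 0 ∧ ∀ c : C, XZ p n c.val *ᵥ ψ = lam c • ψ) :
    ∃ φ : (Fin n → ZMod p) → ℂ,
      cinner φ φ = 1 ∧ (∀ c : C, XZ p n c.val *ᵥ φ = lam c • φ) ∧
        ∀ v : Fin n → ZMod p × ZMod p, v ∉ C →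
          ‖cinner φ (XZ p n v *ᵥ φ)‖ ≤ 3 / 4 := by
  classical
  obtain ⟨ψ, hψ0, hψ⟩ := hQ
  have hCiso : ∀ a ∈ C, ∀ b ∈ C, symp p n a b = 0 := fun a ha b hb => hCself b hb a ha
  obtain ⟨M₀, hCM₀, hM₀iso, hM₀max⟩ :=
    Bad.grow0 p n (Module.finrank (ZMod p) (Fin n → ZMod p × ZMod p)) C hCiso (by omega)
  obtain ⟨φ₀, hφ₀u, hφ₀Q, hφ₀eig⟩ :
      ∃ φ₀ : (Fin n → ZMod p) → ℂ, cinner φ₀ φ₀ = 1 ∧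
        (∀ c : C, XZ p n c.val *ᵥ φ₀ = lam c • φ₀) ∧
        (∀ x ∈ M₀, ∃ μ : ℂ, XZ p n x *ᵥ φ₀ = μ • φ₀) := by
    obtain ⟨φ₀', hφ₀'0, hφ₀'Q, hφ₀'eig⟩ :=
      Bad.exists_joint p n C lam M₀ hM₀iso hCM₀ ψ hψ0 hψ
    obtain ⟨a₀, ha₀pos, ha₀⟩ := Bad.exists_unit φ₀' hφ₀'0
    refine ⟨((a₀ : ℝ) : ℂ) • φ₀', ha₀, ?_, ?_⟩
    · intro c
      rw [Matrix.mulVec_smul, hφ₀'Q, smul_comm]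
    · intro x hx
      obtain ⟨μ, hμ⟩ := hφ₀'eig x hx
      exact ⟨μ, by rw [Matrix.mulVec_smul, hμ, smul_comm]⟩
  by_cases hCmax : ∀ v ∈ M₀, v ∈ C
  · refine ⟨φ₀, hφ₀u, hφ₀Q, ?_⟩
    intro v hv
    have hvM₀ : v ∉ M₀ := fun h => hv (hCmax v h)
    rw [Bad.zero_overlap p n M₀ hM₀max φ₀ hφ₀u hφ₀eig v hvM₀]
    norm_num
  · push_neg at hCmax
    obtain ⟨v₁, hv₁M₀, hv₁C⟩ := hCmax
    obtain ⟨M₁, hCM₁, hM₁iso, hM₁max, hM₁M₀⟩ :=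
      Bad.grow1 p n M₀ hM₀iso (Module.finrank (ZMod p) (Fin n → ZMod p × ZMod p))
        C hCiso (by omega)
    have hM₁capM₀ : M₁ ⊓ M₀ = C := by
      rw [hM₁M₀, inf_eq_left.mpr hCM₀]
    obtain ⟨φ₁, hφ₁u, hφ₁Q, hφ₁eig⟩ :
        ∃ φ₁ : (Fin n → ZMod p) → ℂ, cinner φ₁ φ₁ = 1 ∧
          (∀ c : C, XZ p n c.val *ᵥ φ₁ = lam c • φ₁) ∧
          (∀ x ∈ M₁, ∃ μ : ℂ, XZ p n x *ᵥ φ₁ = μ • φ₁) := by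
      obtain ⟨φ₁', hφ₁'0, hφ₁'Q, hφ₁'eig⟩ :=
        Bad.exists_joint p n C lam M₁ hM₁iso hCM₁ ψ hψ0 hψ
      obtain ⟨a₁, ha₁pos, ha₁⟩ := Bad.exists_unit φ₁' hφ₁'0
      refine ⟨((a₁ : ℝ) : ℂ) • φ₁', ha₁, ?_, ?_⟩
      · intro c
        rw [Matrix.mulVec_smul, hφ₁'Q, smul_comm]
      · intro x hx
        obtain ⟨μ, hμ⟩ := hφ₁'eig x hx
        exact ⟨μ, by rw [Matrix.mulVec_smul, hμ, smul_comm]⟩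
    -- separating vectors between M₀ and M₁
    obtain ⟨w', hw'M₀, hw'M₁⟩ : ∃ w', w' ∈ M₀ ∧ w' ∉ M₁ := by
      by_contra h
      push_neg at h
      apply hv₁C
      have hmem : v₁ ∈ M₁ ⊓ M₀ := ⟨h v₁ hv₁M₀, hv₁M₀⟩
      rw [hM₁capM₀] at hmem
      exact hmem
    obtain ⟨w, hwM₁, hwM₀⟩ : ∃ w, w ∈ M₁ ∧ w ∉ M₀ := by
      by_contra h
      push_neg at h
      have hM₁C : ∀ z ∈ M₁, z ∈ C := by
        intro z hz
        have hmem : z ∈ M₁ ⊓ M₀ := ⟨hz, h z hz⟩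
        rw [hM₁capM₀] at hmem
        exact hmem
      apply hv₁C
      apply hM₁C v₁
      apply hM₁max
      intro c hc
      exact hM₀iso c (hCM₀ (hM₁C c hc)) v₁ hv₁M₀
    -- zero overlap facts
    have hzero₀ : ∀ v ∉ M₀, cinner φ₀ (XZ p n v *ᵥ φ₀) = 0 :=
      fun v hv => Bad.zero_overlap p n M₀ hM₀max φ₀ hφ₀u hφ₀eig v hv
    have hzero₁ : ∀ v ∉ M₁, cinner φ₁ (XZ p n v *ᵥ φ₁) = 0 :=
      fun v hv => Bad.zero_overlap p n M₁ hM₁max φ₁ hφ₁u hφ₁eig v hv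
    -- cross overlap bounds
    have hcross1 : ∀ v : Fin n → ZMod p × ZMod p,
        ‖cinner φ₀ (XZ p n v *ᵥ φ₁)‖ ≤ 3 / 4 := by
      intro v
      obtain ⟨νw, hνw⟩ := hφ₁eig w hwM₁
      refine Bad.overlap p n M₀ hM₀max φ₀ hφ₀u hφ₀eig w hwM₀ (XZ p n v *ᵥ φ₁)
        (Bad.cinner_unitary _ (Bad.XZ_H_mul p n v) φ₁ φ₁ ▸ hφ₁u)
        (Bad.ph p (symp p n w v) * νw) ?_
      rw [Matrix.mulVec_mulVec, Bad.XZ_comm, Matrix.smul_mulVec, ← Matrix.mulVec_mulVec,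
        hνw, Matrix.mulVec_smul, smul_smul]
    have hcross2 : ∀ v : Fin n → ZMod p × ZMod p,
        ‖cinner φ₁ (XZ p n v *ᵥ φ₀)‖ ≤ 3 / 4 := by
      intro v
      obtain ⟨νw, hνw⟩ := hφ₀eig w' hw'M₀
      refine Bad.overlap p n M₁ hM₁max φ₁ hφ₁u hφ₁eig w' hw'M₁ (XZ p n v *ᵥ φ₀)
        (Bad.cinner_unitary _ (Bad.XZ_H_mul p n v) φ₀ φ₀ ▸ hφ₀u)
        (Bad.ph p (symp p n w' v) * νw) ?_
      rw [Matrix.mulVec_mulVec, Bad.XZ_comm, Matrix.smul_mulVec, ← Matrix.mulVec_mulVec,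
        hνw, Matrix.mulVec_smul, smul_smul]
    -- the interpolating state
    set g : ℂ := cinner φ₀ φ₁ with hg
    set cR : ℝ := ‖g‖ with hcR
    have hc0 : 0 ≤ cR := norm_nonneg g
    have hc1 : cR ≤ 1 := by
      have hcs := Bad.cinner_cs φ₀ φ₁
      rw [hφ₀u, hφ₁u, Complex.one_re, mul_one] at hcs
      nlinarith [hc0]
    set θ : ℂ := if g = 0 then 1 else (starRingEnd ℂ) g / ((‖g‖ : ℝ) : ℂ) with hθ
    have hθabs : ‖θ‖ = 1 := by
      rw [hθ]
      by_cases h0 : g = 0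
      · rw [if_pos h0]; simp
      · rw [if_neg h0, norm_div, Complex.norm_conj, Complex.norm_real, Real.norm_eq_abs,
          abs_of_nonneg (norm_nonneg g), div_self (norm_ne_zero_iff.mpr h0)]
    have hθθ : (starRingEnd ℂ) θ * θ = 1 := Bad.conj_mul_self_eq_one hθabs
    have hθg : θ * g = ((cR : ℝ) : ℂ) := by
      rw [hθ, hcR]
      by_cases h0 : g = 0
      · rw [if_pos h0, h0, mul_zero]
        simp
      · rw [if_neg h0, div_mul_eq_mul_div, mul_comm, Complex.mul_conj]
        rw [Complex.normSq_eq_norm_sq]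
        have hne : ((‖g‖ : ℝ) : ℂ) ≠ 0 := by
          simpa using norm_ne_zero_iff.mpr h0
        push_cast
        field_simp
    have hconjtg : (starRingEnd ℂ) θ * (starRingEnd ℂ) g = ((cR : ℝ) : ℂ) := by
      rw [← _root_.map_mul, hθg, Complex.conj_ofReal]
    set u : (Fin n → ZMod p) → ℂ := φ₀ + θ • φ₁ with hu
    have hgconj : cinner φ₁ φ₀ = (starRingEnd ℂ) g := by
      rw [hg, Bad.cinner_conj]
    have hexpand : ∀ A : Matrix (Fin n → ZMod p) (Fin n → ZMod p) ℂ,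
        cinner u (A *ᵥ u)
          = cinner φ₀ (A *ᵥ φ₀) + θ * cinner φ₀ (A *ᵥ φ₁)
            + (starRingEnd ℂ) θ * cinner φ₁ (A *ᵥ φ₀)
            + (starRingEnd ℂ) θ * (θ * cinner φ₁ (A *ᵥ φ₁)) := by
      intro A
      rw [hu, Matrix.mulVec_add, Matrix.mulVec_smul, Bad.cinner_add_left,
        Bad.cinner_add_right, Bad.cinner_add_right, Bad.cinner_smul_left,
        Bad.cinner_smul_left, Bad.cinner_smul_right, Bad.cinner_smul_right]
      ring
    have huu : cinner u u = ((2 + 2 * cR : ℝ) : ℂ) := by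
      rw [hu, Bad.cinner_add_left, Bad.cinner_add_right, Bad.cinner_add_right,
        Bad.cinner_smul_left, Bad.cinner_smul_right, Bad.cinner_smul_left,
        Bad.cinner_smul_right, hφ₀u, hφ₁u, ← hg, hgconj]
      push_cast
      linear_combination hθg + hconjtg + hθθ
    set N : ℝ := 2 + 2 * cR with hN
    have hN2 : (2:ℝ) ≤ N := by rw [hN]; linarith
    have hNpos : (0:ℝ) < N := by linarith
    have hNne : N ≠ 0 := ne_of_gt hNpos
    set b : ℝ := (Real.sqrt N)⁻¹ with hb
    have hbb : b * b = N⁻¹ := by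
      rw [hb, ← mul_inv, Real.mul_self_sqrt (le_of_lt hNpos)]
    set φ : (Fin n → ZMod p) → ℂ := ((b : ℝ) : ℂ) • u with hφdef
    have hφform : ∀ A : Matrix (Fin n → ZMod p) (Fin n → ZMod p) ℂ,
        cinner φ (A *ᵥ φ) = ((N⁻¹ : ℝ) : ℂ) * cinner u (A *ᵥ u) := by
      intro A
      rw [hφdef, Matrix.mulVec_smul, Bad.cinner_smul_left, Bad.cinner_smul_right,
        Complex.conj_ofReal, ← mul_assoc, ← Complex.ofReal_mul, hbb]
    have hφunit : cinner φ φ = 1 := by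
      rw [hφdef, Bad.cinner_smul_left, Bad.cinner_smul_right, Complex.conj_ofReal, huu]
      norm_cast
      rw [← mul_assoc, hbb]
      exact inv_mul_cancel₀ hNne
    have hφQ : ∀ c : C, XZ p n c.val *ᵥ φ = lam c • φ := by
      intro c
      rw [hφdef, Matrix.mulVec_smul, hu, Matrix.mulVec_add, Matrix.mulVec_smul,
        hφ₀Q, hφ₁Q]
      module
    refine ⟨φ, hφunit, hφQ, ?_⟩
    intro v hv
    have habsform : ∀ A : Matrix (Fin n → ZMod p) (Fin n → ZMod p) ℂ,
        ‖cinner φ (A *ᵥ φ)‖ = N⁻¹ * ‖cinner u (A *ᵥ u)‖ := by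
      intro A
      rw [hφform, norm_mul, Complex.norm_real, Real.norm_eq_abs,
        abs_of_nonneg (by positivity : (0:ℝ) ≤ N⁻¹)]
    rw [habsform]
    have hnotboth : ¬ (v ∈ M₀ ∧ v ∈ M₁) := by
      rintro ⟨h0, h1⟩
      exact hv (hM₁capM₀ ▸ (⟨h1, h0⟩ : v ∈ M₁ ⊓ M₀))
    by_cases hv0 : v ∈ M₀
    · -- v ∈ M₀ \ M₁
      have hv1 : v ∉ M₁ := fun h => hnotboth ⟨hv0, h⟩
      obtain ⟨μ, hμ⟩ := hφ₀eig v hv0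
      obtain ⟨hμabs, hμconj⟩ := Bad.eig_abs_conj _ (Bad.XZ_H_mul p n v) hφ₀u hμ
      have hT00 : cinner φ₀ (XZ p n v *ᵥ φ₀) = μ := by
        rw [hμ, Bad.cinner_smul_right, hφ₀u, mul_one]
      have hT01 : cinner φ₀ (XZ p n v *ᵥ φ₁) = μ * g := by
        rw [Bad.cinner_mulVec_right, hμconj, Bad.cinner_smul_left, Complex.conj_conj, hg]
      have hT10 : cinner φ₁ (XZ p n v *ᵥ φ₀) = μ * (starRingEnd ℂ) g := by
        rw [hμ, Bad.cinner_smul_right, hgconj]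
      have hval : cinner u (XZ p n v *ᵥ u) = μ * ((1 + 2 * cR : ℝ) : ℂ) := by
        rw [hexpand, hT00, hT01, hT10, hzero₁ v hv1]
        push_cast
        linear_combination μ * hθg + μ * hconjtg
      rw [hval, norm_mul, hμabs, one_mul, Complex.norm_real, Real.norm_eq_abs,
        abs_of_nonneg (by linarith : (0:ℝ) ≤ 1 + 2 * cR)]
      rw [← div_eq_inv_mul, div_le_iff₀ hNpos, hN]
      nlinarith [hc1]
    · by_cases hv1 : v ∈ M₁
      · -- v ∈ M₁ \ M₀
        obtain ⟨ν, hν⟩ := hφ₁eig v hv1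
        obtain ⟨hνabs, hνconj⟩ := Bad.eig_abs_conj _ (Bad.XZ_H_mul p n v) hφ₁u hν
        have hT11 : cinner φ₁ (XZ p n v *ᵥ φ₁) = ν := by
          rw [hν, Bad.cinner_smul_right, hφ₁u, mul_one]
        have hT01 : cinner φ₀ (XZ p n v *ᵥ φ₁) = ν * g := by
          rw [hν, Bad.cinner_smul_right, hg]
        have hT10 : cinner φ₁ (XZ p n v *ᵥ φ₀) = ν * (starRingEnd ℂ) g := by
          rw [Bad.cinner_mulVec_right, hνconj, Bad.cinner_smul_left, Complex.conj_conj,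
            hgconj]
        have hval : cinner u (XZ p n v *ᵥ u) = ν * ((1 + 2 * cR : ℝ) : ℂ) := by
          rw [hexpand, hT01, hT10, hT11, hzero₀ v hv0]
          push_cast
          linear_combination ν * hθg + ν * hconjtg + ν * hθθ
        rw [hval, norm_mul, hνabs, one_mul, Complex.norm_real, Real.norm_eq_abs,
          abs_of_nonneg (by linarith : (0:ℝ) ≤ 1 + 2 * cR)]
        rw [← div_eq_inv_mul, div_le_iff₀ hNpos, hN]
        nlinarith [hc1]
      · -- v in neither
        have hval : cinner u (XZ p n v *ᵥ u)
            = θ * cinner φ₀ (XZ p n v *ᵥ φ₁)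
              + (starRingEnd ℂ) θ * cinner φ₁ (XZ p n v *ᵥ φ₀) := by
          rw [hexpand, hzero₀ v hv0, hzero₁ v hv1]
          ring
        have hbound : ‖cinner u (XZ p n v *ᵥ u)‖ ≤ 3 / 2 := by
          rw [hval]
          calc ‖θ * cinner φ₀ (XZ p n v *ᵥ φ₁)
                + (starRingEnd ℂ) θ * cinner φ₁ (XZ p n v *ᵥ φ₀)‖
              ≤ ‖θ * cinner φ₀ (XZ p n v *ᵥ φ₁)‖
                + ‖(starRingEnd ℂ) θ * cinner φ₁ (XZ p n v *ᵥ φ₀)‖ :=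
                norm_add_le _ _
            _ = ‖cinner φ₀ (XZ p n v *ᵥ φ₁)‖
                + ‖cinner φ₁ (XZ p n v *ᵥ φ₀)‖ := by
                rw [norm_mul, norm_mul, Complex.norm_conj, hθabs,
                  one_mul, one_mul]
            _ ≤ 3 / 4 + 3 / 4 := add_le_add (hcross1 v) (hcross2 v)
            _ = 3 / 2 := by norm_num
        rw [← div_eq_inv_mul]
        rw [div_le_iff₀ hNpos]
        nlinarith [hbound, hN2]
end
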